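/- Let f : Z → ℝ be smooth on a closed surface Z and η a 1-form on Z such that f·dη + η ∧ df is a volume form. Then f must vanish somewhere on Z: the dividing set f⁻¹(0) is non-empty. -/

import Mathlib

/-- on a closed surface `Z` there are no smooth nowhere-vanishing
`f : Z → ℝ` and 1-form `η` such that `f·dη + η ∧ df` is a volume form.
The graded de Rham data on `Z` is abstracted: `Ω¹`, `Ω²` are modules over the
functions `Z → ℝ`, with differentials `d0`, `d1`, a wedge `Ω¹ × Ω¹ → Ω²`
satisfying the Leibniz rules and antisymmetry, and integration of 2-forms
satisfying Stokes' theorem; a volume form has nonzero integral, and scaling a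
volume form by a nowhere-vanishing function again gives a volume form. -/
theorem no_nonvanishing_dividing_function
    {Z : Type*} [TopologicalSpace Z] [CompactSpace Z]
    {Ω1 Ω2 : Type*} [AddCommGroup Ω1] [AddCommGroup Ω2]
    [Module (Z → ℝ) Ω1] [Module (Z → ℝ) Ω2]
    (d0 : (Z → ℝ) →+ Ω1) (d1 : Ω1 →+ Ω2)
    (wedge : Ω1 → Ω1 → Ω2)
    (hLeibniz0 : ∀ g h : Z → ℝ, d0 (g * h) = g • d0 h + h • d0 g)
    (hLeibniz1 : ∀ (g : Z → ℝ) (η : Ω1), d1 (g • η) = g • d1 η + wedge (d0 g) η)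
    (hwedge_smul : ∀ (g : Z → ℝ) (a b : Ω1), wedge (g • a) b = g • wedge a b)
    (hwedge_anti : ∀ a b : Ω1, wedge a b = -wedge b a)
    (IsVolumeForm : Ω2 → Prop)
    (integral : Ω2 → ℝ)
    (hStokes : ∀ η : Ω1, integral (d1 η) = 0)
    (hVolInt : ∀ μ : Ω2, IsVolumeForm μ → integral μ ≠ 0)
    (hVolSmul : ∀ (g : Z → ℝ) (μ : Ω2), (∀ x, g x ≠ 0) → IsVolumeForm μ →
      IsVolumeForm (g • μ))
    (f : Z → ℝ) (hf : ∀ x, f x ≠ 0) (η : Ω1)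
    (hvol : IsVolumeForm (f • d1 η + wedge η (d0 f))) :
    False := by
  set g : Z → ℝ := fun x => (f x)⁻¹ with hg
  have hg0 : ∀ x, g x ≠ 0 := fun x => inv_ne_zero (hf x)
  have hfg : f * g = 1 := by
    funext x; exact mul_inv_cancel₀ (hf x)
  -- d0 1 = 0
  have hd1 : d0 (1 : Z → ℝ) = 0 := by
    have h := hLeibniz0 1 1
    simp only [mul_one, one_smul] at h
    have := h.symm
    -- d0 1 = d0 1 + d0 1
    have h2 : d0 (1 : Z → ℝ) + d0 (1 : Z → ℝ) - d0 1 = d0 1 - d0 1 := by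
      rw [← h]
    simpa using h2
  have hdfg : f • d0 g + g • d0 f = 0 := by
    have := hLeibniz0 f g
    rw [hfg, hd1] at this
    exact this.symm
  have key : ((f*f) : Z → ℝ) • d1 (g • η) = f • d1 η + wedge η (d0 f) := by
    rw [hLeibniz1, smul_add]
    congr 1
    · rw [← mul_smul]
      congr 1
      funext x
      simp [hg, mul_assoc, mul_inv_cancel₀ (hf x)]
    · have hdg : f • d0 g = -(g • d0 f) := by
        rw [eq_neg_iff_add_eq_zero]; exact hdfg
      calc ((f*f) : Z → ℝ) • wedge (d0 g) η
          = wedge (((f*f) : Z → ℝ) • d0 g) η := (hwedge_smul _ _ _).symm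
        _ = wedge (f • (f • d0 g)) η := by rw [mul_smul]
        _ = wedge (f • (-(g • d0 f))) η := by rw [hdg]
        _ = wedge (-(((f*g) : Z → ℝ) • d0 f)) η := by rw [smul_neg, mul_smul]
        _ = wedge (-(d0 f)) η := by rw [hfg, one_smul]
        _ = wedge ((-1 : Z → ℝ) • d0 f) η := by rw [neg_one_smul]
        _ = (-1 : Z → ℝ) • wedge (d0 f) η := hwedge_smul _ _ _
        _ = -(wedge (d0 f) η) := by rw [neg_one_smul]
        _ = wedge η (d0 f) := by rw [hwedge_anti (d0 f) η, neg_neg]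
  have hgg0 : ∀ x, ((g*g) : Z → ℝ) x ≠ 0 := fun x => mul_ne_zero (hg0 x) (hg0 x)
  have hvol2 : IsVolumeForm (((g*g) : Z → ℝ) • (f • d1 η + wedge η (d0 f))) :=
    hVolSmul _ _ hgg0 hvol
  have heq : ((g*g) : Z → ℝ) • (f • d1 η + wedge η (d0 f)) = d1 (g • η) := by
    rw [← key, ← mul_smul]
    have : ((g*g) * (f*f) : Z → ℝ) = 1 := by
      funext x
      simp only [hg, Pi.mul_apply, Pi.one_apply]
      field_simp
      exact div_self (hf x)
    rw [this, one_smul]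
  rw [heq] at hvol2
  exact hVolInt _ hvol2 (hStokes _)
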